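/- (Nikolov–Pyber) Let G be a finite group of order n, and let δ > 0 be a real number such that every nonzero finite-dimensional real representation of G having no nonzero G-invariant vector has dimension at least δ. If A, B, C are subsets of G with #A · #B · #C · δ > n³, then ABC = G, where ABC = {abc : a ∈ A, b ∈ B, c ∈ C}. -/

import Mathlib

open RealInnerProductSpace

noncomputable section NP

variable {G : Type} [Group G] [Fintype G] [DecidableEq G]

/-- convolution operator: (npT A f) g = ∑_{a∈A} f (a⁻¹ g) -/
def npT (A : Finset G) : EuclideanSpace ℝ G →ₗ[ℝ] EuclideanSpace ℝ G where
  toFun f := WithLp.toLp 2 (fun g => ∑ a ∈ A, f (a⁻¹ * g))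
  map_add' f h := PiLp.ext fun g => by simp [Finset.sum_add_distrib]
  map_smul' c f := PiLp.ext fun g => by simp [Finset.mul_sum]

def npS (A : Finset G) : EuclideanSpace ℝ G →ₗ[ℝ] EuclideanSpace ℝ G where
  toFun f := WithLp.toLp 2 (fun g => ∑ a ∈ A, f (a * g))
  map_add' f h := PiLp.ext fun g => by simp [Finset.sum_add_distrib]
  map_smul' c f := PiLp.ext fun g => by simp [Finset.mul_sum]

/-- right regular representation operator -/
def npR (s : G) : EuclideanSpace ℝ G →ₗ[ℝ] EuclideanSpace ℝ G where
  toFun f := WithLp.toLp 2 (fun g => f (g * s))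
  map_add' f h := PiLp.ext fun g => rfl
  map_smul' c f := PiLp.ext fun g => rfl

@[simp] lemma npT_apply (A : Finset G) (f : EuclideanSpace ℝ G) (g : G) :
    npT A f g = ∑ a ∈ A, f (a⁻¹ * g) := rfl

@[simp] lemma npS_apply (A : Finset G) (f : EuclideanSpace ℝ G) (g : G) :
    npS A f g = ∑ a ∈ A, f (a * g) := rfl

@[simp] lemma npR_apply (s : G) (f : EuclideanSpace ℝ G) (g : G) :
    npR s f g = f (g * s) := rfl

lemma euclid_inner (x y : EuclideanSpace ℝ G) : ⟪x, y⟫ = ∑ g, x g * y g := by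
  simp [PiLp.inner_apply, RCLike.inner_apply, conj_trivial]
  exact Finset.sum_congr rfl fun _ _ => mul_comm _ _

lemma npS_adjoint (A : Finset G) : LinearMap.adjoint (npT A) = npS A := by
  symm
  rw [LinearMap.eq_adjoint_iff]
  intro x y
  have L : ⟪npS A x, y⟫ = ∑ a ∈ A, ∑ g, x (a * g) * y g := by
    rw [euclid_inner]; simp only [npS_apply, Finset.sum_mul]; rw [Finset.sum_comm]
  have R : ⟪x, npT A y⟫ = ∑ a ∈ A, ∑ g, x g * y (a⁻¹ * g) := by
    rw [euclid_inner]; simp only [npT_apply, Finset.mul_sum]; rw [Finset.sum_comm]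
  rw [L, R]
  refine Finset.sum_congr rfl fun a _ => ?_
  exact Fintype.sum_equiv (Equiv.mulLeft a) _ _ (fun t => by rw [Equiv.coe_mulLeft, inv_mul_cancel_left])


def npOne (G : Type) [Fintype G] : EuclideanSpace ℝ G := WithLp.toLp 2 (fun _ => 1)

lemma inner_npOne (v : EuclideanSpace ℝ G) : ⟪npOne G, v⟫ = ∑ g, v g := by
  simp [euclid_inner, npOne]

lemma npR_sum (s : G) (v : EuclideanSpace ℝ G) : ∑ g, npR s v g = ∑ g, v g := by
  exact Fintype.sum_equiv (Equiv.mulRight s) _ _ (fun t => by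
    simp [Equiv.coe_mulRight, npR_apply])

lemma npM_comm (A : Finset G) (s : G) (f : EuclideanSpace ℝ G) :
    (npS A ∘ₗ npT A) (npR s f) = npR s ((npS A ∘ₗ npT A) f) := by
  have h1 : npT A (npR s f) = npR s (npT A f) := PiLp.ext fun g => by
    simp only [npT_apply, npR_apply]
    exact Finset.sum_congr rfl fun a _ => by rw [mul_assoc]
  have h2 : ∀ u, npS A (npR s u) = npR s (npS A u) := fun u => PiLp.ext fun g => by
    simp only [npS_apply, npR_apply]
    exact Finset.sum_congr rfl fun a _ => by rw [mul_assoc]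
  simp only [LinearMap.comp_apply, h1, h2]

lemma npM_symmetric (A : Finset G) : (npS A ∘ₗ npT A).IsSymmetric := by
  rw [← npS_adjoint, ← Module.End.mul_eq_comp]
  exact LinearMap.isSymmetric_adjoint_mul_self _

lemma npM_one (A : Finset G) :
    (npS A ∘ₗ npT A) (npOne G) = ((A.card : ℝ)^2) • npOne G := by
  ext g
  simp [npOne, PiLp.smul_apply, sq, smul_eq_mul]

lemma trace_ob {E : Type} [NormedAddCommGroup E] [InnerProductSpace ℝ E]
    [FiniteDimensional ℝ E] {ι : Type} [Fintype ι] [DecidableEq ι]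
    (b : OrthonormalBasis ι ℝ E) (M : E →ₗ[ℝ] E) :
    LinearMap.trace ℝ E M = ∑ i, ⟪b i, M (b i)⟫ := by
  rw [LinearMap.trace_eq_matrix_trace ℝ b.toBasis, Matrix.trace]
  simp [Matrix.diag, LinearMap.toMatrix_apply, OrthonormalBasis.coe_toBasis_repr_apply,
    OrthonormalBasis.repr_apply_apply, OrthonormalBasis.coe_toBasis]

lemma npM_trace (A : Finset G) :
    LinearMap.trace ℝ _ (npS A ∘ₗ npT A) = (Fintype.card G : ℝ) * A.card := by
  rw [trace_ob (EuclideanSpace.basisFun G ℝ)]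
  have key : ∀ h : G,
      ⟪(EuclideanSpace.basisFun G ℝ) h, (npS A ∘ₗ npT A) ((EuclideanSpace.basisFun G ℝ) h)⟫
        = (A.card : ℝ) := by
    intro h
    have e1 : ∀ g : G, ((EuclideanSpace.basisFun G ℝ) h : EuclideanSpace ℝ G) g
        = if g = h then 1 else 0 := fun g => by
      simp [EuclideanSpace.basisFun_apply, EuclideanSpace.single_apply]
    rw [euclid_inner]
    have e2 : ∀ g : G, (npS A ∘ₗ npT A) ((EuclideanSpace.basisFun G ℝ) h) g
        = ∑ a ∈ A, ∑ a' ∈ A, if a'⁻¹ * (a * g) = h then (1:ℝ) else 0 := fun g => by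
      simp [e1]
    simp only [e1, e2, ite_mul, one_mul, zero_mul]
    rw [Finset.sum_ite_eq' Finset.univ h]
    simp only [Finset.mem_univ, if_true]
    have e3 : ∀ a ∈ A, (∑ a' ∈ A, if a'⁻¹ * (a * h) = h then (1:ℝ) else 0) = 1 := by
      intro a ha
      have hc : ∀ a' : G, (a'⁻¹ * (a * h) = h) ↔ a' = a := by
        intro a'
        rw [inv_mul_eq_iff_eq_mul]
        constructor
        · intro hh; exact (mul_right_cancel (hh.symm.trans rfl)).symm ▸ rfl
        · intro hh; rw [hh]
      simp_rw [hc]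
      rw [Finset.sum_ite_eq' A a]
      simp [ha]
    rw [Finset.sum_congr rfl e3]
    simp
  rw [Finset.sum_congr rfl (fun h _ => key h)]
  simp [Finset.sum_const, mul_comm]


lemma np_spectral (δ : ℝ)
    (hrep : ∀ (V : Type) [AddCommGroup V] [Module ℝ V] [FiniteDimensional ℝ V]
      (ρ : Representation ℝ G V), Nontrivial V →
      (∀ v : V, (∀ g : G, ρ g v = v) → v = 0) →
      δ ≤ Module.finrank ℝ V)
    (A : Finset G) (f : EuclideanSpace ℝ G) (hf : ⟪npOne G, f⟫ = 0) :
    δ * ⟪(npS A ∘ₗ npT A) f, f⟫ ≤ (Fintype.card G : ℝ) * A.card * ⟪f, f⟫ := by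
  set M := npS A ∘ₗ npT A with hMdef
  have hM : M.IsSymmetric := npM_symmetric A
  have hE : Module.finrank ℝ (EuclideanSpace ℝ G) = Fintype.card G :=
    finrank_euclideanSpace
  set b := hM.eigenvectorBasis hE with hb
  set μ := hM.eigenvalues hE with hμ
  have heig : ∀ i, M (b i) = μ i • b i := fun i => by
    have := hM.apply_eigenvectorBasis hE i
    rwa [RCLike.real_smul_eq_coe_smul (K := ℝ)] at this
  have honn : ∀ i j, ⟪b i, b j⟫ = if i = j then 1 else 0 := fun i j =>
    orthonormal_iff_ite.mp b.orthonormal i j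
  set c : Fin (Fintype.card G) → ℝ := fun i => ⟪b i, f⟫ with hc
  have hcdef : ∀ i, ⟪b i, f⟫ = c i := fun i => (congrFun hc i).symm
  have hrepr : f = ∑ i, c i • b i := by
    conv_lhs => rw [← b.sum_repr f]
    exact Finset.sum_congr rfl fun i _ => by
      rw [OrthonormalBasis.repr_apply_apply]
  have hMfsum : M f = ∑ i, (c i * μ i) • b i := by
    conv_lhs => rw [hrepr]
    rw [map_sum]
    exact Finset.sum_congr rfl fun i _ => by rw [map_smul, heig, smul_smul]
  have hMf : ⟪M f, f⟫ = ∑ i, μ i * (c i * c i) := by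
    rw [hMfsum, sum_inner]
    refine Finset.sum_congr rfl fun i _ => ?_
    rw [real_inner_smul_left, hcdef]
    ring
  have hff : ⟪f, f⟫ = ∑ i, c i * c i := by
    nth_rewrite 1 [hrepr]
    rw [sum_inner]
    exact Finset.sum_congr rfl fun i _ => by rw [real_inner_smul_left, hcdef]
  have hMTT : ∀ u v : EuclideanSpace ℝ G, ⟪M u, v⟫ = ⟪npT A u, npT A v⟫ := by
    intro u v
    rw [hMdef, LinearMap.comp_apply, ← npS_adjoint, LinearMap.adjoint_inner_left]
  have hμ0 : ∀ i, 0 ≤ μ i := by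
    intro i
    have h1 : ⟪M (b i), b i⟫ = μ i := by
      rw [heig, real_inner_smul_left, honn]
      simp
    rw [← h1, hMTT]
    exact real_inner_self_nonneg
  have htr : ∑ j, μ j = (Fintype.card G : ℝ) * A.card := by
    have h1 := trace_ob b M
    rw [npM_trace A] at h1
    rw [h1]
    refine Finset.sum_congr rfl fun j _ => ?_
    rw [heig, real_inner_smul_right, honn]
    simp
  have key : ∀ i, c i ≠ 0 → δ * μ i ≤ (Fintype.card G : ℝ) * A.card := by
    intro i hci
    set S : Finset (Fin (Fintype.card G)) := Finset.univ.filter (fun j => μ j = μ i) with hS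
    have hiS : i ∈ S := by simp [hS]
    have hdzero : ∀ j, μ j ≠ (A.card : ℝ)^2 → ⟪npOne G, b j⟫ = 0 := by
      intro j hj
      have h1 : μ j * ⟪npOne G, b j⟫ = (A.card : ℝ)^2 * ⟪npOne G, b j⟫ := by
        calc μ j * ⟪npOne G, b j⟫ = ⟪npOne G, μ j • b j⟫ := by rw [real_inner_smul_right]
          _ = ⟪npOne G, M (b j)⟫ := by rw [heig]
          _ = ⟪M (npOne G), b j⟫ := (hM (npOne G) (b j)).symm
          _ = ⟪((A.card : ℝ)^2) • npOne G, b j⟫ := by rw [npM_one]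
          _ = (A.card : ℝ)^2 * ⟪npOne G, b j⟫ := by rw [real_inner_smul_left]
      have h2 : (μ j - (A.card : ℝ)^2) * ⟪npOne G, b j⟫ = 0 := by ring_nf; linarith [h1]
      rcases mul_eq_zero.mp h2 with h3 | h3
      · exact absurd (by linarith [sub_eq_zero.mp h3]) hj
      · exact h3
    set fμ : EuclideanSpace ℝ G := ∑ j ∈ S, c j • b j with hfμ
    have hfμ1 : ⟪npOne G, fμ⟫ = 0 := by
      rw [hfμ, inner_sum]
      simp_rw [real_inner_smul_right]
      by_cases hcase : μ i = (A.card : ℝ)^2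
      · calc ∑ j ∈ S, c j * ⟪npOne G, b j⟫ = ∑ j, c j * ⟪npOne G, b j⟫ := by
              refine Finset.sum_subset (Finset.subset_univ S) ?_
              intro j _ hj
              have hne : μ j ≠ μ i := by simpa [hS] using hj
              rw [hdzero j (fun hh => hne (hh.trans hcase.symm)), mul_zero]
          _ = ⟪npOne G, f⟫ := by
              conv_rhs => rw [hrepr]
              rw [inner_sum]
              exact Finset.sum_congr rfl fun j _ => (real_inner_smul_right _ _ _).symm
          _ = 0 := hf
      · refine Finset.sum_eq_zero fun j hj => ?_
        have hj' : μ j = μ i := by simpa [hS] using hj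
        rw [hdzero j (fun hh => hcase (hj' ▸ hh)), mul_zero]
    have hfμeig : M fμ = μ i • fμ := by
      rw [hfμ, map_sum, Finset.smul_sum]
      refine Finset.sum_congr rfl fun j hj => ?_
      have hj' : μ j = μ i := by simpa [hS] using hj
      rw [map_smul, heig, hj', smul_smul, smul_smul, mul_comm]
    have hfμne : fμ ≠ 0 := by
      intro h0
      have h1 : ⟪b i, fμ⟫ = c i := by
        rw [hfμ, inner_sum]
        simp_rw [real_inner_smul_right, honn]
        rw [Finset.sum_eq_single i]
        · simp
        · intro j _ hji; simp [hji.symm]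
        · intro hi; exact absurd hiS hi
      rw [h0, inner_zero_right] at h1
      exact hci h1.symm
    set W : Submodule ℝ (EuclideanSpace ℝ G) :=
      { carrier := {v | M v = μ i • v ∧ ⟪npOne G, v⟫ = 0}
        add_mem' := by
          rintro x y ⟨hx1, hx2⟩ ⟨hy1, hy2⟩
          refine ⟨?_, ?_⟩
          · rw [map_add, hx1, hy1, smul_add]
          · rw [inner_add_right, hx2, hy2, add_zero]
        zero_mem' := by
          refine ⟨?_, ?_⟩
          · rw [map_zero, smul_zero]
          · rw [inner_zero_right]
        smul_mem' := by
          rintro r x ⟨hx1, hx2⟩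
          refine ⟨?_, ?_⟩
          · rw [map_smul, hx1, smul_comm]
          · rw [real_inner_smul_right, hx2, mul_zero] } with hW
    have hWmem : ∀ v, v ∈ W ↔ M v = μ i • v ∧ ⟪npOne G, v⟫ = 0 := fun v => Iff.rfl
    have hfμW : fμ ∈ W := ⟨hfμeig, hfμ1⟩
    have hWR : ∀ s : G, ∀ v ∈ W, npR s v ∈ W := by
      intro s v hv
      rw [hWmem] at hv ⊢
      obtain ⟨hv1, hv2⟩ := hv
      refine ⟨?_, ?_⟩
      · rw [npM_comm, hv1, map_smul]
      · rw [inner_npOne, npR_sum, ← inner_npOne]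
        exact hv2
    have hWnt : Nontrivial W :=
      nontrivial_of_ne (⟨fμ, hfμW⟩ : W) 0 (by
        intro hcon
        exact hfμne (by simpa using congrArg Subtype.val hcon))
    set ρ : Representation ℝ G W :=
      { toFun := fun s => (npR s).restrict (fun v hv => hWR s v hv)
        map_one' := by
          refine LinearMap.ext fun v => Subtype.ext (PiLp.ext fun g => ?_)
          simp only [LinearMap.restrict_apply, Module.End.one_apply, npR_apply]
          rw [mul_one]
        map_mul' := fun s t => by
          refine LinearMap.ext fun v => Subtype.ext (PiLp.ext fun g => ?_)
          simp only [LinearMap.restrict_apply, Module.End.mul_apply, npR_apply]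
          rw [mul_assoc] } with hρ
    have hNoInv : ∀ v : W, (∀ g : G, ρ g v = v) → v = 0 := by
      intro v hv
      have hv' : ∀ x s : G, (v : EuclideanSpace ℝ G) (x * s) = (v : EuclideanSpace ℝ G) x := by
        intro x s
        have h1 := congrArg Subtype.val (hv s)
        exact congrArg (fun w : EuclideanSpace ℝ G => w x) h1
      have hconst : ∀ g : G, (v : EuclideanSpace ℝ G) g = (v : EuclideanSpace ℝ G) 1 := by
        intro g
        have := hv' 1 g
        rwa [one_mul] at this
      have hsum : (Fintype.card G : ℝ) * (v : EuclideanSpace ℝ G) 1 = 0 := by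
        have h2 := v.2.2
        rw [inner_npOne] at h2
        rw [← h2]
        rw [Finset.sum_congr rfl (fun g _ => hconst g)]
        simp [Finset.sum_const, mul_comm]
      have hcard : (Fintype.card G : ℝ) ≠ 0 := by
        exact_mod_cast Fintype.card_ne_zero
      have h1 : (v : EuclideanSpace ℝ G) 1 = 0 := by
        rcases mul_eq_zero.mp hsum with h | h
        · exact absurd h hcard
        · exact h
      exact Subtype.ext (PiLp.ext fun g => by rw [hconst g, h1]; rfl)
    have hdim : δ ≤ (Module.finrank ℝ W : ℝ) := hrep W ρ hWnt hNoInv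
    set φ : W →ₗ[ℝ] ({j // j ∈ S} → ℝ) :=
      { toFun := fun v => fun j => ⟪b j.1, (v : EuclideanSpace ℝ G)⟫
        map_add' := fun u v => funext fun j => by
          simp [inner_add_right]
        map_smul' := fun r v => funext fun j => by
          simp only [Submodule.coe_smul, RingHom.id_apply, Pi.smul_apply, smul_eq_mul]
          exact real_inner_smul_right _ _ _ } with hφ
    have hφinj : Function.Injective φ := by
      rw [← LinearMap.ker_eq_bot, LinearMap.ker_eq_bot']
      intro v hv0
      have hSv : ∀ j ∈ S, ⟪b j, (v : EuclideanSpace ℝ G)⟫ = 0 := fun j hj =>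
        congrFun hv0 ⟨j, hj⟩
      have hall : ∀ j, ⟪b j, (v : EuclideanSpace ℝ G)⟫ = 0 := by
        intro j
        by_cases hj : j ∈ S
        · exact hSv j hj
        · have hne : μ j ≠ μ i := by simpa [hS] using hj
          have h1 : μ j * ⟪b j, (v : EuclideanSpace ℝ G)⟫
              = μ i * ⟪b j, (v : EuclideanSpace ℝ G)⟫ := by
            calc μ j * ⟪b j, (v : EuclideanSpace ℝ G)⟫
                = ⟪μ j • b j, (v : EuclideanSpace ℝ G)⟫ := (real_inner_smul_left _ _ _).symm
              _ = ⟪M (b j), (v : EuclideanSpace ℝ G)⟫ := by rw [heig]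
              _ = ⟪b j, M (v : EuclideanSpace ℝ G)⟫ := hM _ _
              _ = ⟪b j, μ i • (v : EuclideanSpace ℝ G)⟫ := by rw [v.2.1]
              _ = μ i * ⟪b j, (v : EuclideanSpace ℝ G)⟫ := real_inner_smul_right _ _ _
          have h2 : (μ j - μ i) * ⟪b j, (v : EuclideanSpace ℝ G)⟫ = 0 := by
            ring_nf; linarith [h1]
          rcases mul_eq_zero.mp h2 with h3 | h3
          · exact absurd (sub_eq_zero.mp h3) hne
          · exact h3
      have hv' : (v : EuclideanSpace ℝ G) = 0 := by
        rw [← b.sum_repr (v : EuclideanSpace ℝ G)]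
        refine Finset.sum_eq_zero fun j _ => ?_
        rw [OrthonormalBasis.repr_apply_apply, hall j, zero_smul]
      exact Subtype.ext hv'
    have hrank : (Module.finrank ℝ W : ℝ) ≤ (S.card : ℝ) := by
      have h1 := LinearMap.finrank_le_finrank_of_injective hφinj
      rw [Module.finrank_fintype_fun_eq_card, Fintype.card_coe] at h1
      exact_mod_cast h1
    have hδS : δ ≤ (S.card : ℝ) := le_trans hdim hrank
    have hchain : μ i * S.card ≤ (Fintype.card G : ℝ) * A.card := by
      have h1 : μ i * S.card = ∑ j ∈ S, μ j := by
        rw [Finset.sum_congr rfl (fun j hj => (by simpa [hS] using hj : μ j = μ i))]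
        simp [Finset.sum_const, mul_comm]
      rw [h1, ← htr]
      exact Finset.sum_le_sum_of_subset_of_nonneg (Finset.subset_univ S)
        (fun j _ _ => hμ0 j)
    calc δ * μ i ≤ (S.card : ℝ) * μ i :=
          mul_le_mul_of_nonneg_right hδS (hμ0 i)
      _ = μ i * S.card := by ring
      _ ≤ (Fintype.card G : ℝ) * A.card := hchain
  rw [hMf, hff, Finset.mul_sum, Finset.mul_sum]
  refine Finset.sum_le_sum fun i _ => ?_
  by_cases hci : c i = 0
  · rw [hci]; ring_nf; rfl
  · have h1 : δ * μ i ≤ (Fintype.card G : ℝ) * A.card := key i hci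
    have h2 : 0 ≤ c i * c i := mul_self_nonneg _
    calc δ * (μ i * (c i * c i)) = (δ * μ i) * (c i * c i) := by ring
      _ ≤ ((Fintype.card G : ℝ) * A.card) * (c i * c i) :=
          mul_le_mul_of_nonneg_right h1 h2

end NP

open Pointwise

theorem nikolov_pyber {G : Type} [Group G] [Fintype G] [DecidableEq G]
    (δ : ℝ) (hδ : 0 < δ)
    (hrep : ∀ (V : Type) [AddCommGroup V] [Module ℝ V] [FiniteDimensional ℝ V]
      (ρ : Representation ℝ G V), Nontrivial V →
      (∀ v : V, (∀ g : G, ρ g v = v) → v = 0) →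
      δ ≤ Module.finrank ℝ V)
    (A B C : Finset G)
    (h : (Fintype.card G : ℝ) ^ 3 < (A.card : ℝ) * B.card * C.card * δ) :
    A * B * C = Finset.univ := by
  by_contra hne
  obtain ⟨x, hx⟩ : ∃ x : G, x ∉ A * B * C := by
    by_contra h2
    push_neg at h2
    exact hne (Finset.eq_univ_iff_forall.mpr h2)
  have hn : (0:ℝ) < (Fintype.card G : ℝ) := by exact_mod_cast Fintype.card_pos
  have hn3 : (0:ℝ) < (Fintype.card G : ℝ)^3 := by positivity
  have hA : 0 < (A.card : ℝ) := by
    rcases Nat.eq_zero_or_pos A.card with h0 | h0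
    · rw [h0] at h; norm_num at h; nlinarith
    · exact_mod_cast h0
  have hB : 0 < (B.card : ℝ) := by
    rcases Nat.eq_zero_or_pos B.card with h0 | h0
    · rw [h0] at h; norm_num at h; nlinarith
    · exact_mod_cast h0
  have hC : 0 < (C.card : ℝ) := by
    rcases Nat.eq_zero_or_pos C.card with h0 | h0
    · rw [h0] at h; norm_num at h; nlinarith
    · exact_mod_cast h0
  set n : ℝ := (Fintype.card G : ℝ) with hndef
  set f : EuclideanSpace ℝ G :=
    WithLp.toLp 2 (fun g => (if g ∈ B then (1:ℝ) else 0) - (B.card : ℝ) / n) with hfdef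
  have hfapp : ∀ g : G, f g = (if g ∈ B then (1:ℝ) else 0) - (B.card : ℝ) / n :=
    fun g => rfl
  have hsumB : ∑ g : G, (if g ∈ B then (1:ℝ) else 0) = B.card := by
    rw [Finset.sum_ite_mem, Finset.univ_inter]
    simp
  have hf0 : ⟪npOne G, f⟫ = 0 := by
    rw [inner_npOne, Finset.sum_congr rfl (fun g _ => hfapp g),
      Finset.sum_sub_distrib, hsumB, Finset.sum_const]
    rw [nsmul_eq_mul]
    field_simp
    rw [Finset.card_univ, ← hndef]; ring
  have hTf : ∀ g : G, npT A f g
      = (∑ a ∈ A, if a⁻¹ * g ∈ B then (1:ℝ) else 0) - A.card * B.card / n := by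
    intro g
    rw [npT_apply, Finset.sum_congr rfl (fun a _ => hfapp (a⁻¹ * g)),
      Finset.sum_sub_distrib, Finset.sum_const, nsmul_eq_mul]
    ring
  have hTfD : ∀ c ∈ C, npT A f (x * c⁻¹) = -(A.card * B.card / n) := by
    intro cc hcc
    rw [hTf]
    have hz : ∀ a ∈ A, (if a⁻¹ * (x * cc⁻¹) ∈ B then (1:ℝ) else 0) = 0 := by
      intro a ha
      rw [if_neg]
      intro hb
      apply hx
      have hxeq : x = a * (a⁻¹ * (x * cc⁻¹)) * cc := by group
      rw [hxeq]
      exact Finset.mul_mem_mul (Finset.mul_mem_mul ha hb) hcc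
    rw [Finset.sum_congr rfl hz, Finset.sum_const, smul_zero]
    ring
  set D : Finset G := C.image (fun c => x * c⁻¹) with hD
  have hDcard : D.card = C.card :=
    Finset.card_image_of_injective _ (fun c1 c2 hc => by
      have := mul_left_cancel hc
      exact inv_injective this)
  have hlow : (C.card : ℝ) * (A.card * B.card / n)^2 ≤ ⟪npT A f, npT A f⟫ := by
    rw [euclid_inner]
    have h1 : ∀ g ∈ D, ((A.card : ℝ) * B.card / n)^2 ≤ npT A f g * npT A f g := by
      intro g hg
      obtain ⟨cc, hcc, rfl⟩ := Finset.mem_image.mp hg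
      rw [hTfD cc hcc]
      exact le_of_eq (by ring)
    calc (C.card:ℝ) * (A.card * B.card / n)^2
        = ∑ _g ∈ D, ((A.card:ℝ) * B.card/n)^2 := by
          rw [Finset.sum_const, hDcard, nsmul_eq_mul]
      _ ≤ ∑ g ∈ D, npT A f g * npT A f g := Finset.sum_le_sum h1
      _ ≤ ∑ g, npT A f g * npT A f g :=
          Finset.sum_le_sum_of_subset_of_nonneg (Finset.subset_univ D)
            (fun g _ _ => mul_self_nonneg _)
  have hup : δ * ⟪(npS A ∘ₗ npT A) f, f⟫ ≤ n * A.card * ⟪f,f⟫ :=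
    np_spectral δ hrep A f hf0
  have hMTT : ⟪(npS A ∘ₗ npT A) f, f⟫ = ⟪npT A f, npT A f⟫ := by
    rw [LinearMap.comp_apply, ← npS_adjoint, LinearMap.adjoint_inner_left]
  have hffB : ⟪f, f⟫ ≤ (B.card : ℝ) := by
    rw [euclid_inner]
    have h1 : ∀ g : G, f g * f g
        = ((if g ∈ B then (1:ℝ) else 0) - 2 * ((B.card:ℝ)/n) * (if g ∈ B then (1:ℝ) else 0))
          + ((B.card:ℝ)/n)^2 := by
      intro g
      rw [hfapp g]
      by_cases hg : g ∈ B <;> simp [hg] <;> ring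
    rw [Finset.sum_congr rfl (fun g _ => h1 g), Finset.sum_add_distrib,
      Finset.sum_sub_distrib, hsumB, ← Finset.mul_sum, hsumB, Finset.sum_const,
      nsmul_eq_mul, Finset.card_univ]
    have hB2 : (0:ℝ) ≤ (B.card:ℝ)^2 / n := by positivity
    have hexp : (B.card:ℝ) - 2 * ((B.card:ℝ)/n) * B.card + n * ((B.card:ℝ)/n)^2
        = B.card - (B.card:ℝ)^2/n := by
      field_simp
      ring
    rw [hexp]
    linarith
  -- combine
  have hq : (0:ℝ) < (A.card:ℝ) * B.card := mul_pos hA hB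
  have hchain : δ * ((C.card:ℝ) * (A.card * B.card / n)^2) ≤ n * A.card * B.card := by
    calc δ * ((C.card:ℝ) * (A.card * B.card / n)^2)
        ≤ δ * ⟪npT A f, npT A f⟫ := mul_le_mul_of_nonneg_left hlow hδ.le
      _ = δ * ⟪(npS A ∘ₗ npT A) f, f⟫ := by rw [hMTT]
      _ ≤ n * A.card * ⟪f,f⟫ := hup
      _ ≤ n * A.card * B.card := by
          have : (0:ℝ) ≤ n * A.card := by positivity
          exact mul_le_mul_of_nonneg_left hffB this
  have hfinal : (A.card:ℝ) * B.card * C.card * δ ≤ n^3 := by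
    rw [div_pow] at hchain
    have h2 : δ * ((C.card:ℝ) * ((A.card * B.card)^2 / n^2))
        = (δ * C.card * (A.card*B.card)^2) / n^2 := by ring
    rw [h2, div_le_iff₀ (by positivity : (0:ℝ) < n^2)] at hchain
    have h3 : δ * (C.card:ℝ) * (A.card*B.card)^2 ≤ n^3 * (A.card * B.card) := by
      calc δ * (C.card:ℝ) * (A.card*B.card)^2 ≤ n * A.card * B.card * n^2 := hchain
        _ = n^3 * (A.card * B.card) := by ring
    nlinarith [h3, hq]
  linarith
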